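/- Comparison of windowed costs with their unitary versions: Let f₁, …, f_T : (ℝ^d)^h → ℝ each be G-Lipschitz with respect to the Euclidean norm on (ℝ^d)^h. Let x₁, …, x_T ∈ ℝ^d and pad x_t = x₁ for all t ≤ 0. Then |Σ_{t=1}^T [f_t(x_{t−h+1:t}) − f_t(x_t, x_t, …, x_t)]| ≤ G·h²·Σ_{t=1}^{T−1} ‖x_t − x_{t+1}‖. (This is inequality (A.13) in the proof of Theorem 1 of the paper.) -/

import Mathlib

/-- The sequence `x₁, x₂, … : ℕ → ℝ^d` (1-based) extended to integer indices, padded with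
`x₁` for all indices `t ≤ 0`. -/
noncomputable def padSeq {d : ℕ} (x : ℕ → EuclideanSpace ℝ (Fin d)) (t : ℤ) :
    EuclideanSpace ℝ (Fin d) :=
  if 1 ≤ t then x t.toNat else x 1

/-- The `t`-th window `x_{t-h+1:t} = (x_{t-h+1}, …, x_t) ∈ (ℝ^d)^h`, where the product
space carries the Euclidean (`L²`) norm. -/
noncomputable def windowSeq {d : ℕ} (h : ℕ) (x : ℕ → EuclideanSpace ℝ (Fin d)) (t : ℤ) :
    PiLp 2 (fun _ : Fin h => EuclideanSpace ℝ (Fin d)) :=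
  WithLp.toLp 2 (fun i => padSeq x (t - h + 1 + i))

lemma pilp_norm_le_sum {ι : Type*} [Fintype ι] {β : ι → Type*}
    [∀ i, SeminormedAddCommGroup (β i)] (z : PiLp 2 β) :
    ‖z‖ ≤ ∑ i, ‖z i‖ := by
  rw [PiLp.norm_eq_of_L2]
  have h1 : ∑ i, ‖z i‖ ^ 2 ≤ (∑ i, ‖z i‖) ^ 2 :=
    Finset.sum_sq_le_sq_sum_of_nonneg (fun i _ => norm_nonneg _)
  calc Real.sqrt (∑ i, ‖z i‖ ^ 2) ≤ Real.sqrt ((∑ i, ‖z i‖) ^ 2) := Real.sqrt_le_sqrt h1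
    _ = ∑ i, ‖z i‖ := Real.sqrt_sq (Finset.sum_nonneg fun i _ => norm_nonneg _)

lemma telescope {d : ℕ} (x : ℕ → EuclideanSpace ℝ (Fin d)) (a b : ℕ) (hab : a ≤ b) :
    ‖x a - x b‖ ≤ ∑ s ∈ Finset.Ico a b, ‖x s - x (s + 1)‖ := by
  induction b, hab using Nat.le_induction with
  | base => simp
  | succ b hab ih =>
    rw [Finset.sum_Ico_succ_top (by omega)]
    calc ‖x a - x (b + 1)‖ ≤ ‖x a - x b‖ + ‖x b - x (b + 1)‖ := by
          simpa [dist_eq_norm] using dist_triangle (x a) (x b) (x (b + 1))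
      _ ≤ _ := by linarith


/-- If each `f_t : (ℝ^d)^h → ℝ` is `G`-Lipschitz, then for points
`x₁, …, x_T ∈ ℝ^d` padded by `x₁` for `t ≤ 0`,
`|∑_{t=1}^T (f_t(x_{t−h+1:t}) − f_t(x_t, …, x_t))| ≤ G h² ∑_{t=1}^{T−1} ‖x_t − x_{t+1}‖`. -/
theorem window_vs_unitary_sum {d h T : ℕ} (hd : 1 ≤ d) (hh : 1 ≤ h) (hT : 1 ≤ T)
    (G : ℝ)
    (f : ℕ → (PiLp 2 fun _ : Fin h => EuclideanSpace ℝ (Fin d)) → ℝ)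
    (hf : ∀ t, 1 ≤ t → t ≤ T → ∀ z w, |f t z - f t w| ≤ G * ‖z - w‖)
    (x : ℕ → EuclideanSpace ℝ (Fin d)) :
    |∑ t ∈ Finset.Icc 1 T, (f t (windowSeq h x t) - f t (WithLp.toLp 2 (fun _ => x t)))| ≤
      G * h ^ 2 * ∑ t ∈ Finset.Icc 1 (T - 1), ‖x t - x (t + 1)‖ := by
  classical
  -- G is nonnegative
  have hG : 0 ≤ G := by
    set z : PiLp 2 fun _ : Fin h => EuclideanSpace ℝ (Fin d) :=
      WithLp.toLp 2 (fun _ => WithLp.toLp 2 (fun _ => 1)) with hz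
    have hz0 : z ≠ 0 := by
      intro h0
      have := congrArg (fun v => v ⟨0, hh⟩ ⟨0, hd⟩) h0
      simpa [hz] using this
    have hzpos : 0 < ‖z - 0‖ := by
      rw [sub_zero]; exact norm_pos_iff.mpr hz0
    have h1 := hf 1 le_rfl hT z 0
    nlinarith [abs_nonneg (f 1 z - f 1 0)]
  set dxt : ℕ → ℝ := fun s => ‖x s - x (s + 1)‖ with hdxt
  have hdnn : ∀ s, 0 ≤ dxt s := fun s => norm_nonneg _
  set S : ℕ → ℝ := fun t => ∑ s ∈ Finset.Ico (max 1 (t + 1 - h)) t, dxt s with hS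
  -- per-term bound
  have key : ∀ t ∈ Finset.Icc 1 T,
      |f t (windowSeq h x t) - f t (WithLp.toLp 2 (fun _ => x t))| ≤ G * (h * S t) := by
    intro t ht
    rw [Finset.mem_Icc] at ht
    set w : PiLp 2 (fun _ : Fin h => EuclideanSpace ℝ (Fin d)) := WithLp.toLp 2 (fun _ => x t) with hw
    have h1 := hf t ht.1 ht.2 (windowSeq h x t) w
    refine h1.trans (mul_le_mul_of_nonneg_left ?_ hG)
    have hnorm : ‖windowSeq h x t - w‖ ≤
        ∑ i : Fin h, ‖windowSeq h x t i - x t‖ := by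
      simpa [hw] using pilp_norm_le_sum (windowSeq h x t - w)
    refine hnorm.trans ?_
    have hcoord : ∀ i : Fin h, ‖windowSeq h x t i - x t‖ ≤ S t := by
      intro i
      have hval : windowSeq h x t i = x (max 1 (t + 1 + i - h)) := by
        have hlt := i.isLt
        unfold windowSeq padSeq
        simp only [PiLp.toLp_apply]
        split_ifs with hc
        · have he : ((t : ℤ) - h + 1 + i).toNat = max 1 (t + 1 + (i : ℕ) - h) := by
            omega
          rw [he]
        · have he : 1 = max 1 (t + 1 + (i : ℕ) - h) := by omega
          rw [← he]
      rw [hval]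
      have hm1 : max 1 (t + 1 + (i : ℕ) - h) ≤ t := by
        have := i.2; omega
      calc ‖x (max 1 (t + 1 + (i : ℕ) - h)) - x t‖
          ≤ ∑ s ∈ Finset.Ico (max 1 (t + 1 + (i : ℕ) - h)) t, dxt s :=
            telescope x _ t hm1
        _ ≤ S t := by
            apply Finset.sum_le_sum_of_subset_of_nonneg
            · apply Finset.Ico_subset_Ico_left; omega
            · intro s _ _; exact hdnn s
    calc ∑ i : Fin h, ‖windowSeq h x t i - x t‖ ≤ ∑ _i : Fin h, S t :=
          Finset.sum_le_sum fun i _ => hcoord i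
      _ = h * S t := by simp [mul_comm]
  -- sum of S t bounded
  have hswap : ∑ t ∈ Finset.Icc 1 T, S t ≤ h * ∑ s ∈ Finset.Icc 1 (T - 1), dxt s := by
    have hrewrite : ∀ t ∈ Finset.Icc 1 T, S t =
        ∑ s ∈ Finset.Icc 1 (T - 1),
          (if s ∈ Finset.Ico (max 1 (t + 1 - h)) t then dxt s else 0) := by
      intro t ht
      rw [Finset.mem_Icc] at ht
      rw [Finset.sum_ite_mem, Finset.inter_eq_right.mpr]
      intro s hs
      rw [Finset.mem_Ico] at hs
      rw [Finset.mem_Icc]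
      omega
    rw [Finset.sum_congr rfl hrewrite, Finset.sum_comm]
    rw [Finset.mul_sum]
    refine Finset.sum_le_sum fun s hs => ?_
    rw [Finset.sum_ite, Finset.sum_const_zero, add_zero, Finset.sum_const, nsmul_eq_mul]
    refine mul_le_mul_of_nonneg_right ?_ (hdnn s)
    have hsub : (Finset.Icc 1 T).filter (fun t => s ∈ Finset.Ico (max 1 (t + 1 - h)) t)
        ⊆ Finset.Icc (s + 1) (s + h - 1) := by
      intro t ht
      simp only [Finset.mem_filter, Finset.mem_Icc, Finset.mem_Ico] at ht ⊢
      omega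
    have := Finset.card_le_card hsub
    rw [Nat.card_Icc] at this
    have : ((Finset.Icc 1 T).filter
        (fun t => s ∈ Finset.Ico (max 1 (t + 1 - h)) t)).card ≤ h := by omega
    exact_mod_cast this
  calc |∑ t ∈ Finset.Icc 1 T, (f t (windowSeq h x t) - f t (WithLp.toLp 2 (fun _ => x t)))|
      ≤ ∑ t ∈ Finset.Icc 1 T, |f t (windowSeq h x t) - f t (WithLp.toLp 2 (fun _ => x t))| :=
        Finset.abs_sum_le_sum_abs _ _
    _ ≤ ∑ t ∈ Finset.Icc 1 T, G * (h * S t) := Finset.sum_le_sum key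
    _ = G * h * ∑ t ∈ Finset.Icc 1 T, S t := by rw [Finset.mul_sum]; ring_nf
    _ ≤ G * h * (h * ∑ s ∈ Finset.Icc 1 (T - 1), dxt s) := by
        apply mul_le_mul_of_nonneg_left hswap (by positivity)
    _ = G * h ^ 2 * ∑ t ∈ Finset.Icc 1 (T - 1), ‖x t - x (t + 1)‖ := by
        rw [hdxt]; ring
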